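/- There exists a constant c₁ > 0 depending only on β such that for all integers n ≥ ℓ ≥ n₀ and all t > 0, one has |Ψ_n^{(ℓ)}(t)| ≤ c₁ · e^{−γ(2^ℓ)t/4}. -/

import Mathlib

open Filter Topology Asymptotics MeasureTheory

noncomputable section

/-- The hypotheses on the fragmentation coefficient `γ` in the region `n ≥ n₀`:
monotonicity along powers of two and two-sided power-law bounds of exponent `β`. -/
def GammaHyp (β : ℝ) (γ : ℝ → ℝ) (n₀ : ℕ) : Prop :=
  (∀ ξ : ℝ, 0 < ξ → 0 < γ ξ) ∧
  (∀ n : ℤ, (n₀:ℤ) ≤ n → γ ((2:ℝ) ^ n) < γ ((2:ℝ) ^ (n + 1))) ∧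
  ∀ n m : ℤ, (n₀:ℤ) ≤ n → (n₀:ℤ) ≤ m →
    1 / 2 * (2:ℝ) ^ (β * ((n:ℝ) - (m:ℝ))) ≤ γ ((2:ℝ) ^ n) / γ ((2:ℝ) ^ m) ∧
      γ ((2:ℝ) ^ n) / γ ((2:ℝ) ^ m) ≤ 3 / 2 * (2:ℝ) ^ (β * ((n:ℝ) - (m:ℝ)))

/-- The fundamental solution
`Ψ_n^{(ℓ)}(t) = Σ_{k=ℓ}^n (γ(2^k)/γ(2^ℓ)) ∏_{j=ℓ, j≠k}^n (1 − γ(2^k)/γ(2^j))⁻¹ e^{−γ(2^k)t/4}`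
for `n ≥ ℓ`, and `Ψ_n^{(ℓ)}(t) = 0` for `n < ℓ`. -/
def Psi (γ : ℝ → ℝ) (l n : ℤ) (t : ℝ) : ℝ :=
  if l ≤ n then
    ∑ c ∈ Finset.Icc l n,
      γ ((2:ℝ) ^ c) / γ ((2:ℝ) ^ l) *
        (∏ j ∈ (Finset.Icc l n).erase c, (1 - γ ((2:ℝ) ^ c) / γ ((2:ℝ) ^ j))⁻¹) *
        Real.exp (-(γ ((2:ℝ) ^ c) * t / 4))
  else 0

noncomputable def stmt13.phi (β : ℝ) (m : ℤ) : ℝ :=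
  (3/2) * (2:ℝ)^(β*(m:ℝ)) * ∏ d ∈ Finset.Icc (1:ℤ) m, ((1/2) * (2:ℝ)^(β*(d:ℝ)) - 1)⁻¹

namespace stmt13

lemma eps_pos {β : ℝ} (hβ1 : 1 < β) : 0 < (1/2) * (2:ℝ)^(β:ℝ) - 1 := by
  have h : (2:ℝ)^(1:ℝ) < (2:ℝ)^(β:ℝ) :=
    Real.rpow_lt_rpow_left_iff (by norm_num) |>.mpr hβ1
  rw [Real.rpow_one] at h; linarith

lemma factor_ge {β : ℝ} (hβ1 : 1 < β) {d : ℤ} (hd : 1 ≤ d) :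
    (1/2) * (2:ℝ)^(β:ℝ) - 1 ≤ (1/2) * (2:ℝ)^(β*(d:ℝ)) - 1 := by
  have h : (2:ℝ)^(β:ℝ) ≤ (2:ℝ)^(β*(d:ℝ)) := by
    apply Real.rpow_le_rpow_left_iff (x := 2) (by norm_num) |>.mpr
    have : (1:ℝ) ≤ (d:ℝ) := by exact_mod_cast hd
    nlinarith
  linarith

lemma factor_pos {β : ℝ} (hβ1 : 1 < β) {d : ℤ} (hd : 1 ≤ d) :
    0 < (1/2) * (2:ℝ)^(β*(d:ℝ)) - 1 :=
  lt_of_lt_of_le (eps_pos hβ1) (factor_ge hβ1 hd)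

lemma phi_pos {β : ℝ} (hβ1 : 1 < β) {m : ℤ} : 0 < phi β m := by
  unfold phi
  apply mul_pos (mul_pos (by norm_num) (Real.rpow_pos_of_pos (by norm_num) _))
  apply Finset.prod_pos
  intro d hd
  exact inv_pos.mpr (factor_pos hβ1 (Finset.mem_Icc.mp hd).1)

lemma phi_succ {β : ℝ} {m : ℤ} (hm : 0 ≤ m) :
    phi β (m+1) = phi β m * ((2:ℝ)^(β:ℝ) * ((1/2) * (2:ℝ)^(β*((m:ℝ)+1)) - 1)⁻¹) := by
  unfold phi
  have hins : Finset.Icc (1:ℤ) (m+1) = insert (m+1) (Finset.Icc 1 m) := by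
    ext x; simp [Finset.mem_Icc]; omega
  rw [hins, Finset.prod_insert (by simp)]
  push_cast
  rw [show β * ((m:ℝ)+1) = β*(m:ℝ) + β by ring, Real.rpow_add (by norm_num)]
  ring

lemma two_rpow_le_four {β : ℝ} (hβ2 : β < 2) : (2:ℝ)^(β:ℝ) ≤ 4 := by
  have h : (2:ℝ)^(β:ℝ) ≤ (2:ℝ)^(2:ℝ) :=
    Real.rpow_le_rpow_left_iff (x := 2) (by norm_num) |>.mpr hβ2.le
  have : (2:ℝ)^(2:ℝ) = 4 := by
    rw [show (2:ℝ) = ((2:ℕ):ℝ) by norm_num, Real.rpow_natCast]; norm_num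
  linarith

lemma phi_ratio_le {β : ℝ} (hβ1 : 1 < β) (hβ2 : β < 2) {m : ℤ} (hm : 0 ≤ m) :
    phi β (m+1) ≤ phi β m * (4 / ((1/2) * (2:ℝ)^(β:ℝ) - 1)) := by
  rw [phi_succ hm]
  have hε := eps_pos hβ1
  have hf : (1/2) * (2:ℝ)^(β:ℝ) - 1 ≤ (1/2) * (2:ℝ)^(β*((m:ℝ)+1)) - 1 := by
    have := factor_ge hβ1 (d := m+1) (by omega); push_cast at this ⊢; linarith
  have hinv : ((1/2) * (2:ℝ)^(β*((m:ℝ)+1)) - 1)⁻¹ ≤ ((1/2) * (2:ℝ)^(β:ℝ) - 1)⁻¹ :=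
    inv_anti₀ hε hf
  have h1 : (2:ℝ)^(β:ℝ) * ((1/2) * (2:ℝ)^(β*((m:ℝ)+1)) - 1)⁻¹ ≤ 4 / ((1/2) * (2:ℝ)^(β:ℝ) - 1) := by
    rw [div_eq_mul_inv]
    apply mul_le_mul (two_rpow_le_four hβ2) hinv
      (inv_nonneg.mpr (by linarith)) (by norm_num)
  exact mul_le_mul_of_nonneg_left h1 (phi_pos hβ1).le

lemma phi_ratio_half {β : ℝ} (hβ1 : 1 < β) (hβ2 : β < 2) {m : ℤ} (hm : 4 ≤ m) :
    phi β (m+1) ≤ phi β m * (1/2) := by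
  rw [phi_succ (by omega)]
  have hpow : (32:ℝ) ≤ (2:ℝ)^(β*((m:ℝ)+1)) := by
    have h5 : (5:ℝ) ≤ β*((m:ℝ)+1) := by
      have h4 : (4:ℝ) ≤ (m:ℝ) := by exact_mod_cast hm
      nlinarith
    have := Real.rpow_le_rpow_left_iff (x := (2:ℝ)) (by norm_num) |>.mpr h5
    have h32 : (2:ℝ)^(5:ℝ) = 32 := by
      rw [show (5:ℝ) = ((5:ℕ):ℝ) by norm_num, Real.rpow_natCast]; norm_num
    linarith
  have hratio : (2:ℝ)^(β:ℝ) * ((1/2) * (2:ℝ)^(β*((m:ℝ)+1)) - 1)⁻¹ ≤ 1/2 := by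
    rw [mul_inv_le_iff₀ (by linarith)]
    have := two_rpow_le_four hβ2
    linarith
  have := phi_pos (β := β) hβ1 (m := m)
  nlinarith [Real.rpow_pos_of_pos (show (0:ℝ) < 2 by norm_num) (β:ℝ),
    inv_pos.mpr (show (0:ℝ) < (1/2) * (2:ℝ)^(β*((m:ℝ)+1)) - 1 by linarith)]

end stmt13

noncomputable def stmt13.q (β : ℝ) : ℝ := 4 / ((1/2) * (2:ℝ)^(β:ℝ) - 1)

namespace stmt13

lemma phi_zero {β : ℝ} : phi β 0 = 3/2 := by
  unfold phi
  rw [Finset.Icc_eq_empty (by omega)]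
  norm_num

lemma sum_phi_le {β : ℝ} (hβ1 : 1 < β) (hβ2 : β < 2) (M : ℤ) :
    ∑ m ∈ Finset.Icc (0:ℤ) M, phi β m ≤
      (3/2) * (1 + q β + (q β)^2 + (q β)^3 + 2*(q β)^4) := by
  set ε := (1/2) * (2:ℝ)^(β:ℝ) - 1 with hεdef
  have hε := eps_pos hβ1
  have hq : 0 < q β := by unfold q; positivity
  have hphi0 : phi β 0 = 3/2 := phi_zero
  have hstep : ∀ m : ℤ, 0 ≤ m → phi β (m+1) ≤ phi β m * q β :=
    fun m hm => phi_ratio_le hβ1 hβ2 hm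
  have h1 : phi β 1 ≤ (3/2) * q β := by
    have := hstep 0 le_rfl; rw [hphi0] at this; simpa using this
  have h2 : phi β 2 ≤ (3/2) * (q β)^2 := by
    have := hstep 1 (by norm_num)
    calc phi β 2 ≤ phi β 1 * q β := by simpa using this
    _ ≤ (3/2) * q β * q β := by gcongr
    _ = (3/2) * (q β)^2 := by ring
  have h3 : phi β 3 ≤ (3/2) * (q β)^3 := by
    have := hstep 2 (by norm_num)
    calc phi β 3 ≤ phi β 2 * q β := by simpa using this
    _ ≤ (3/2) * (q β)^2 * q β := by gcongr
    _ = (3/2) * (q β)^3 := by ring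
  have h4 : phi β 4 ≤ (3/2) * (q β)^4 := by
    have := hstep 3 (by norm_num)
    calc phi β 4 ≤ phi β 3 * q β := by simpa using this
    _ ≤ (3/2) * (q β)^3 * q β := by gcongr
    _ = (3/2) * (q β)^4 := by ring
  set S4 : ℝ := ∑ m ∈ Finset.Icc (0:ℤ) 3, phi β m with hS4
  have hS4le : S4 ≤ (3/2) * (1 + q β + (q β)^2 + (q β)^3) := by
    have hicc : Finset.Icc (0:ℤ) 3 = {0, 1, 2, 3} := by decide
    rw [hS4, hicc]
    rw [show ({0,1,2,3} : Finset ℤ) = insert 0 (insert 1 (insert 2 ({3} : Finset ℤ))) from rfl]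
    rw [Finset.sum_insert (by decide), Finset.sum_insert (by decide),
      Finset.sum_insert (by decide), Finset.sum_singleton]
    rw [hphi0]; linarith
  -- key induction for M ≥ 4
  have key : ∀ N : ℕ, ∑ m ∈ Finset.Icc (0:ℤ) (4 + (N:ℤ)), phi β m ≤
      S4 + 2 * phi β 4 - phi β (4 + (N:ℤ)) := by
    intro N
    induction N with
    | zero =>
      have : Finset.Icc (0:ℤ) 4 = insert 4 (Finset.Icc 0 3) := by
        ext x; simp [Finset.mem_Icc]; omega
      simp only [Nat.cast_zero, add_zero]
      rw [this, Finset.sum_insert (by simp)]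
      linarith
    | succ N ih =>
      have hM : (4:ℤ) + (N+1:ℕ) = (4 + (N:ℤ)) + 1 := by push_cast; ring
      rw [hM]
      have hins : Finset.Icc (0:ℤ) ((4 + (N:ℤ))+1) = insert ((4 + (N:ℤ))+1) (Finset.Icc 0 (4 + (N:ℤ))) := by
        ext x; simp [Finset.mem_Icc]; omega
      rw [hins, Finset.sum_insert (by simp [Finset.mem_Icc])]
      have hhalf := phi_ratio_half hβ1 hβ2 (m := 4 + (N:ℤ)) (by omega)
      have hp := phi_pos (β := β) hβ1 (m := 4 + (N:ℤ))
      linarith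
  have main : ∑ m ∈ Finset.Icc (0:ℤ) M, phi β m ≤ S4 + 2 * phi β 4 := by
    rcases le_or_gt M 3 with hM | hM
    · have hsub : Finset.Icc (0:ℤ) M ⊆ Finset.Icc 0 3 := by
        intro x hx; simp [Finset.mem_Icc] at *; omega
      have := Finset.sum_le_sum_of_subset_of_nonneg hsub
        (fun i _ _ => (phi_pos (β := β) hβ1 (m := i)).le)
      have hp4 := phi_pos (β := β) hβ1 (m := 4)
      linarith
    · obtain ⟨N, hN⟩ : ∃ N : ℕ, M = 4 + (N:ℤ) :=
        ⟨(M-4).toNat, by omega⟩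
      subst hN
      have := key N
      have hpM := phi_pos (β := β) hβ1 (m := 4 + (N:ℤ))
      linarith
  calc ∑ m ∈ Finset.Icc (0:ℤ) M, phi β m ≤ S4 + 2 * phi β 4 := main
    _ ≤ (3/2) * (1 + q β + (q β)^2 + (q β)^3) + 2 * ((3/2) * (q β)^4) := by linarith
    _ = (3/2) * (1 + q β + (q β)^2 + (q β)^3 + 2*(q β)^4) := by ring

end stmt13

namespace stmt13

lemma prod_reflect (f : ℤ → ℝ) (k a b : ℤ) :
    ∏ j ∈ Finset.Icc a b, f (k - j) = ∏ d ∈ Finset.Icc (k-b) (k-a), f d := by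
  apply Finset.prod_nbij' (fun j => k - j) (fun d => k - d) <;>
    (intros; simp_all [Finset.mem_Icc]; try omega)

lemma sum_shift (f : ℤ → ℝ) (k a b : ℤ) :
    ∑ j ∈ Finset.Icc a b, f (j - k) = ∑ d ∈ Finset.Icc (a-k) (b-k), f d := by
  apply Finset.sum_nbij' (fun j => j - k) (fun d => d + k) <;>
    (intros; simp_all [Finset.mem_Icc]; try omega)

lemma geom_le_one : ∀ D : ℤ, ∑ d ∈ Finset.Icc (1:ℤ) D, (2:ℝ)^(-(d:ℝ)) ≤ 1 := by
  have key : ∀ N : ℕ, ∑ d ∈ Finset.Icc (1:ℤ) (N:ℤ), (2:ℝ)^(-(d:ℝ)) ≤ 1 - (2:ℝ)^(-(N:ℝ)) := by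
    intro N
    induction N with
    | zero => simp
    | succ N ih =>
      have hins : Finset.Icc (1:ℤ) ((N:ℤ)+1) = insert ((N:ℤ)+1) (Finset.Icc 1 (N:ℤ)) := by
        ext x; simp [Finset.mem_Icc]; omega
      push_cast
      rw [hins, Finset.sum_insert (by simp)]
      push_cast
      have h2 : (2:ℝ)^(-(N:ℝ)) = 2 * (2:ℝ)^(-((N:ℝ)+1)) := by
        rw [show -(N:ℝ) = -((N:ℝ)+1) + 1 by ring, Real.rpow_add (by norm_num), Real.rpow_one]
        ring
      linarith
  intro D
  rcases le_or_gt D 0 with hD | hD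
  · rw [Finset.Icc_eq_empty (by omega)]; norm_num
  · obtain ⟨N, hN⟩ : ∃ N : ℕ, D = (N:ℤ) := ⟨D.toNat, by omega⟩
    subst hN
    have := key N
    have : (0:ℝ) < (2:ℝ)^(-(N:ℝ)) := Real.rpow_pos_of_pos (by norm_num) _
    linarith [key N]

lemma aux_inv_le (x : ℝ) (hx0 : 0 ≤ x) (hx : x ≤ 3/4) : (1 - x)⁻¹ ≤ Real.exp (4*x) := by
  have h2 : (1 - x)⁻¹ ≤ 1 + 4*x := by
    rw [inv_le_iff_one_le_mul₀ (by linarith)]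
    nlinarith
  exact h2.trans (by linarith [Real.add_one_le_exp (4*x)])

end stmt13

set_option maxHeartbeats 1000000 in
/-- There is `c₁ > 0` depending only on `β` with
`|Ψ_n^{(ℓ)}(t)| ≤ c₁ e^{−γ(2^ℓ)t/4}` for all `n ≥ ℓ ≥ n₀` and `t > 0`. -/
theorem stmt13 (β : ℝ) (hβ : β ∈ Set.Ioo (1:ℝ) 2) :
    ∃ c₁ > (0:ℝ), ∀ (γ : ℝ → ℝ) (n₀ : ℕ), GammaHyp β γ n₀ →
      ∀ l n : ℤ, (n₀:ℤ) ≤ l → l ≤ n → ∀ t : ℝ, 0 < t →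
        |Psi γ l n t| ≤ c₁ * Real.exp (-(γ ((2:ℝ) ^ l) * t / 4)) := by
  obtain ⟨hβ1, hβ2⟩ := hβ
  have hε := stmt13.eps_pos hβ1
  have hq : 0 < stmt13.q β := by unfold stmt13.q; positivity
  set K : ℝ := (3/2) * (1 + stmt13.q β + (stmt13.q β)^2 + (stmt13.q β)^3 + 2*(stmt13.q β)^4)
    with hK
  have hKpos : 0 < K := by positivity
  refine ⟨Real.exp 6 * K, by positivity, ?_⟩
  intro γ n₀ hyp l n hl hln t ht
  obtain ⟨hpos, hmono, hratio⟩ := hyp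
  set g : ℤ → ℝ := fun k => γ ((2:ℝ)^k) with hg
  have hgpos : ∀ k : ℤ, 0 < g k := fun k => hpos _ (zpow_pos (by norm_num) k)
  -- monotonicity g l ≤ g k for l ≤ k (both ≥ n₀)
  have hmono' : ∀ k : ℤ, l ≤ k → g l ≤ g k := by
    intro k hk
    rcases eq_or_lt_of_le hk with rfl | hlt
    · exact le_rfl
    · have hkn₀ : (n₀:ℤ) ≤ k := le_trans hl hk
      have hlow := (hratio k l hkn₀ hl).1
      have h1 : (1:ℝ) ≤ β * ((k:ℝ) - (l:ℝ)) := by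
        have h0 : (1:ℝ) ≤ ((k - l : ℤ):ℝ) := by exact_mod_cast (by omega : (1:ℤ) ≤ k - l)
        push_cast at h0
        nlinarith
      have h2 : (2:ℝ) ≤ (2:ℝ)^(β * ((k:ℝ)-(l:ℝ))) := by
        have := Real.rpow_le_rpow_left_iff (x := (2:ℝ)) (by norm_num) |>.mpr h1
        rwa [Real.rpow_one] at this
      have : (1:ℝ) ≤ g k / g l := by
        calc (1:ℝ) ≤ 1/2 * (2:ℝ)^(β * ((k:ℝ)-(l:ℝ))) := by linarith
        _ ≤ g k / g l := hlow
      exact (one_le_div (hgpos l)).mp this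
  have hterm : ∀ k ∈ Finset.Icc l n,
      |g k / g l * (∏ j ∈ (Finset.Icc l n).erase k, (1 - g k / g j)⁻¹) *
        Real.exp (-(g k * t / 4))|
      ≤ Real.exp 6 * stmt13.phi β (k - l) * Real.exp (-(g l * t / 4)) := by
    intro k hk
    obtain ⟨hlk, hkn⟩ := Finset.mem_Icc.mp hk
    have hkn₀ : (n₀:ℤ) ≤ k := le_trans hl hlk
    rw [abs_mul, abs_mul, abs_div, abs_of_pos (hgpos k), abs_of_pos (hgpos l),
      Real.abs_exp, Finset.abs_prod]
    simp only [abs_inv]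
    have hsplit : (Finset.Icc l n).erase k = Finset.Icc l (k-1) ∪ Finset.Icc (k+1) n := by
      ext x; simp only [Finset.mem_erase, Finset.mem_Icc, Finset.mem_union]; omega
    have hdisj : Disjoint (Finset.Icc l (k-1)) (Finset.Icc (k+1) n) := by
      rw [Finset.disjoint_left]
      intro x hx hx'
      simp only [Finset.mem_Icc] at hx hx'
      omega
    rw [hsplit, Finset.prod_union hdisj]
    -- bound on the lower product
    have hP1 : ∏ j ∈ Finset.Icc l (k-1), |1 - g k / g j|⁻¹ ≤
        ∏ d ∈ Finset.Icc (1:ℤ) (k - l), ((1/2) * (2:ℝ)^(β*(d:ℝ)) - 1)⁻¹ := by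
      have hrefl := stmt13.prod_reflect
        (fun d => ((1/2) * (2:ℝ)^(β*(d:ℝ)) - 1)⁻¹) k l (k-1)
      rw [show k - (k-1) = (1:ℤ) by ring] at hrefl
      rw [← hrefl]
      refine Finset.prod_le_prod (fun j _ => by positivity) (fun j hj => ?_)
      obtain ⟨hlj, hjk⟩ := Finset.mem_Icc.mp hj
      have hjn₀ : (n₀:ℤ) ≤ j := le_trans hl hlj
      have hlow := (hratio k j hkn₀ hjn₀).1
      have hf : 0 < (1/2) * (2:ℝ)^(β*(((k - j : ℤ)):ℝ)) - 1 :=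
        stmt13.factor_pos hβ1 (by omega)
      have hcast : (((k - j : ℤ)):ℝ) = (k:ℝ) - (j:ℝ) := by push_cast; ring
      rw [hcast] at hf
      have habs : |1 - g k / g j| = g k / g j - 1 := by
        rw [abs_sub_comm]
        exact abs_of_pos (by linarith)
      rw [habs]
      simp only [hcast]
      exact inv_anti₀ hf (by linarith)
    -- bound on the upper product
    have hP2 : ∏ j ∈ Finset.Icc (k+1) n, |1 - g k / g j|⁻¹ ≤ Real.exp 6 := by
      have hle : ∀ j ∈ Finset.Icc (k+1) n,
          |1 - g k / g j|⁻¹ ≤ Real.exp (6 * (2:ℝ)^(-(((j - k : ℤ)):ℝ))) := by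
        intro j hj
        obtain ⟨hkj, hjn⟩ := Finset.mem_Icc.mp hj
        have hjn₀ : (n₀:ℤ) ≤ j := le_trans hl (by omega)
        have hhigh := (hratio k j hkn₀ hjn₀).2
        have hrpos : 0 < g k / g j := div_pos (hgpos k) (hgpos j)
        have hkj1 : (k:ℝ) - (j:ℝ) ≤ -1 := by
          have : ((k - j : ℤ):ℝ) ≤ ((-1 : ℤ):ℝ) := by exact_mod_cast (by omega : k - j ≤ -1)
          push_cast at this; linarith
        have hββ : β * ((k:ℝ)-(j:ℝ)) ≤ (k:ℝ)-(j:ℝ) := by nlinarith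
        have hm : (2:ℝ)^(β*((k:ℝ)-(j:ℝ))) ≤ (2:ℝ)^((k:ℝ)-(j:ℝ)) :=
          Real.rpow_le_rpow_left_iff (x := 2) (by norm_num) |>.mpr hββ
        have hhalf : (2:ℝ)^((k:ℝ)-(j:ℝ)) ≤ 1/2 :=
          calc (2:ℝ)^((k:ℝ)-(j:ℝ)) ≤ (2:ℝ)^(-(1:ℝ)) :=
              Real.rpow_le_rpow_left_iff (x := 2) (by norm_num) |>.mpr (by linarith)
          _ = 1/2 := by
              rw [Real.rpow_neg (by norm_num), Real.rpow_one]; norm_num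
        have hrle : g k / g j ≤ (3/2) * (2:ℝ)^((k:ℝ)-(j:ℝ)) := by
          calc g k / g j ≤ 3/2 * (2:ℝ)^(β*((k:ℝ)-(j:ℝ))) := hhigh
          _ ≤ (3/2) * (2:ℝ)^((k:ℝ)-(j:ℝ)) := by linarith
        have hr34 : g k / g j ≤ 3/4 := by linarith
        have habs : |1 - g k / g j| = 1 - g k / g j := abs_of_nonneg (by linarith)
        rw [habs]
        have hfval : (2:ℝ)^(-(((j - k : ℤ)):ℝ)) = (2:ℝ)^((k:ℝ)-(j:ℝ)) := by
          congr 1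
          push_cast; ring
        calc (1 - g k / g j)⁻¹ ≤ Real.exp (4 * (g k / g j)) :=
              stmt13.aux_inv_le _ hrpos.le hr34
        _ ≤ Real.exp (6 * (2:ℝ)^(-(((j - k : ℤ)):ℝ))) := by
            rw [Real.exp_le_exp, hfval]; linarith
      calc ∏ j ∈ Finset.Icc (k+1) n, |1 - g k / g j|⁻¹
          ≤ ∏ j ∈ Finset.Icc (k+1) n, Real.exp (6 * (2:ℝ)^(-(((j - k : ℤ)):ℝ))) :=
            Finset.prod_le_prod (fun j _ => by positivity) hle
        _ = Real.exp (∑ j ∈ Finset.Icc (k+1) n, 6 * (2:ℝ)^(-(((j - k : ℤ)):ℝ))) :=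
            (Real.exp_sum _ _).symm
        _ ≤ Real.exp 6 := by
            rw [Real.exp_le_exp]
            have hshift : ∑ j ∈ Finset.Icc (k+1) n, 6 * (2:ℝ)^(-(((j - k : ℤ)):ℝ))
                = ∑ d ∈ Finset.Icc (k+1-k) (n-k), 6 * (2:ℝ)^(-((d:ℤ):ℝ)) :=
              stmt13.sum_shift (fun d => 6 * (2:ℝ)^(-((d:ℤ):ℝ))) k (k+1) n
            rw [hshift, show k + 1 - k = (1:ℤ) by ring, ← Finset.mul_sum]
            have hg1 : ∑ d ∈ Finset.Icc (1:ℤ) (n - k), (2:ℝ)^(-((d:ℤ):ℝ)) ≤ 1 :=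
              stmt13.geom_le_one (n - k)
            linarith
    -- assemble
    have hA : g k / g l ≤ (3/2) * (2:ℝ)^(β*((k:ℝ)-(l:ℝ))) := by
      have := (hratio k l hkn₀ hl).2
      linarith
    have hE : Real.exp (-(g k * t / 4)) ≤ Real.exp (-(g l * t / 4)) :=
      Real.exp_le_exp.mpr (by nlinarith [hmono' k hlk])
    have hQ1nonneg : (0:ℝ) ≤ ∏ d ∈ Finset.Icc (1:ℤ) (k - l), ((1/2) * (2:ℝ)^(β*(d:ℝ)) - 1)⁻¹ :=
      Finset.prod_nonneg fun d hd =>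
        (inv_pos.mpr (stmt13.factor_pos hβ1 (Finset.mem_Icc.mp hd).1)).le
    have hP1nonneg : (0:ℝ) ≤ ∏ j ∈ Finset.Icc l (k-1), |1 - g k / g j|⁻¹ :=
      Finset.prod_nonneg fun j _ => by positivity
    have hP2nonneg : (0:ℝ) ≤ ∏ j ∈ Finset.Icc (k+1) n, |1 - g k / g j|⁻¹ :=
      Finset.prod_nonneg fun j _ => by positivity
    have hApos : (0:ℝ) ≤ (3/2) * (2:ℝ)^(β*((k:ℝ)-(l:ℝ))) := by positivity
    have hB : (∏ j ∈ Finset.Icc l (k-1), |1 - g k / g j|⁻¹) *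
          (∏ j ∈ Finset.Icc (k+1) n, |1 - g k / g j|⁻¹)
        ≤ (∏ d ∈ Finset.Icc (1:ℤ) (k - l), ((1/2) * (2:ℝ)^(β*(d:ℝ)) - 1)⁻¹) * Real.exp 6 :=
      mul_le_mul hP1 hP2 hP2nonneg hQ1nonneg
    have hAB : g k / g l * ((∏ j ∈ Finset.Icc l (k-1), |1 - g k / g j|⁻¹) *
          (∏ j ∈ Finset.Icc (k+1) n, |1 - g k / g j|⁻¹))
        ≤ ((3/2) * (2:ℝ)^(β*((k:ℝ)-(l:ℝ)))) *
          ((∏ d ∈ Finset.Icc (1:ℤ) (k - l), ((1/2) * (2:ℝ)^(β*(d:ℝ)) - 1)⁻¹) * Real.exp 6) :=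
      mul_le_mul hA hB (mul_nonneg hP1nonneg hP2nonneg) hApos
    have hfinal : g k / g l * ((∏ j ∈ Finset.Icc l (k-1), |1 - g k / g j|⁻¹) *
          (∏ j ∈ Finset.Icc (k+1) n, |1 - g k / g j|⁻¹)) * Real.exp (-(g k * t / 4))
        ≤ ((3/2) * (2:ℝ)^(β*((k:ℝ)-(l:ℝ)))) *
          ((∏ d ∈ Finset.Icc (1:ℤ) (k - l), ((1/2) * (2:ℝ)^(β*(d:ℝ)) - 1)⁻¹) * Real.exp 6) *
          Real.exp (-(g l * t / 4)) :=
      mul_le_mul hAB hE (Real.exp_nonneg _)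
        (mul_nonneg hApos (mul_nonneg hQ1nonneg (Real.exp_nonneg _)))
    refine hfinal.trans (le_of_eq ?_)
    unfold stmt13.phi
    rw [show (((k - l : ℤ)):ℝ) = (k:ℝ) - (l:ℝ) by push_cast; ring]
    ring
  -- sum up
  unfold Psi
  rw [if_pos hln]
  calc |∑ c ∈ Finset.Icc l n, g c / g l *
        (∏ j ∈ (Finset.Icc l n).erase c, (1 - g c / g j)⁻¹) * Real.exp (-(g c * t / 4))|
      ≤ ∑ c ∈ Finset.Icc l n, |g c / g l *
        (∏ j ∈ (Finset.Icc l n).erase c, (1 - g c / g j)⁻¹) * Real.exp (-(g c * t / 4))| :=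
        Finset.abs_sum_le_sum_abs _ _
    _ ≤ ∑ c ∈ Finset.Icc l n, Real.exp 6 * stmt13.phi β (c - l) * Real.exp (-(g l * t / 4)) :=
        Finset.sum_le_sum hterm
    _ = Real.exp 6 * (∑ c ∈ Finset.Icc l n, stmt13.phi β (c - l)) * Real.exp (-(g l * t / 4)) := by
        rw [← Finset.sum_mul, ← Finset.mul_sum]
    _ ≤ Real.exp 6 * K * Real.exp (-(g l * t / 4)) := by
        have hshift := stmt13.sum_shift (stmt13.phi β) l l n
        rw [show l - l = (0:ℤ) by ring] at hshift
        have hsum : ∑ c ∈ Finset.Icc l n, stmt13.phi β (c - l) ≤ K := by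
          rw [hshift]; exact stmt13.sum_phi_le hβ1 hβ2 (n - l)
        have h1 : (0:ℝ) ≤ Real.exp 6 := (Real.exp_pos _).le
        have h2 : (0:ℝ) ≤ Real.exp (-(g l * t / 4)) := (Real.exp_pos _).le
        exact mul_le_mul_of_nonneg_right (mul_le_mul_of_nonneg_left hsum h1) h2
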